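/- For any probability measure μ on K ⊆ ℝ^d with 0 ∉ K and finite second moments (and support not equal to {0}), the probabilistic frame potential PFP(μ) = (∫∫ |⟨x,y⟩|² dμ(x)dμ(y)) / (∫‖x‖² dμ(x))² satisfies PFP(μ) ≥ 1/d, with equality if and only if μ is a probabilistic tight frame for ℝ^d. -/

import Mathlib

open MeasureTheory RealInnerProductSpace

theorem key_int {d : ℕ} (μ : Measure (EuclideanSpace ℝ (Fin d)))
    (hint : Integrable (fun x => ‖x‖ ^ 2) μ) (i j : Fin d) :
    Integrable (fun x : EuclideanSpace ℝ (Fin d) => x i * x j) μ := by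
  refine hint.mono ?_ ?_
  · exact (((EuclideanSpace.proj i : EuclideanSpace ℝ (Fin d) →L[ℝ] ℝ).continuous.measurable.mul
      (EuclideanSpace.proj j : EuclideanSpace ℝ (Fin d) →L[ℝ] ℝ).continuous.measurable)).aestronglyMeasurable
  · filter_upwards with x
    have h : ∀ k : Fin d, |x k| ≤ ‖x‖ := by
      intro k
      rw [EuclideanSpace.norm_eq]
      have h1 : |x k| = Real.sqrt (x k ^ 2) := by rw [Real.sqrt_sq_eq_abs]
      rw [h1]
      refine Real.sqrt_le_sqrt ?_
      simp only [Real.norm_eq_abs, sq_abs]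
      exact Finset.single_le_sum (f := fun k => x k ^ 2) (fun k _ => sq_nonneg _) (Finset.mem_univ k)
    calc ‖x i * x j‖ = |x i| * |x j| := abs_mul _ _
    _ ≤ ‖x‖ * ‖x‖ := mul_le_mul (h i) (h j) (abs_nonneg _) (norm_nonneg _)
    _ ≤ ‖(fun x : EuclideanSpace ℝ (Fin d) => ‖x‖^2) x‖ := by simp [abs_of_nonneg, sq]

theorem norm_sq_sum {d : ℕ} (x : EuclideanSpace ℝ (Fin d)) : ‖x‖^2 = ∑ i, x i * x i := by
  rw [EuclideanSpace.norm_eq, Real.sq_sqrt (by positivity)]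
  simp [sq]

theorem inner_expand {d : ℕ} (μ : Measure (EuclideanSpace ℝ (Fin d)))
    (hint : Integrable (fun x => ‖x‖ ^ 2) μ) (x : EuclideanSpace ℝ (Fin d)) :
    (∫ y, ⟪x, y⟫ ^ 2 ∂μ) = ∑ i, ∑ j, x i * x j * (∫ y, y i * y j ∂μ) := by
  have e1 : ∀ y : EuclideanSpace ℝ (Fin d),
      ⟪x, y⟫ ^ 2 = ∑ i, ∑ j, x i * x j * (y i * y j) := by
    intro y
    simp only [PiLp.inner_apply, RCLike.inner_apply, conj_trivial]
    rw [sq, Finset.sum_mul_sum]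
    exact Finset.sum_congr rfl fun i _ => Finset.sum_congr rfl fun j _ => by ring
  simp_rw [e1]
  rw [integral_finset_sum _ (fun i _ => integrable_finset_sum _
    (fun j _ => (key_int μ hint i j).const_mul _))]
  refine Finset.sum_congr rfl fun i _ => ?_
  rw [integral_finset_sum _ (fun j _ => (key_int μ hint i j).const_mul _)]
  exact Finset.sum_congr rfl fun j _ => integral_const_mul _ _

theorem stmt_14 {d : ℕ} (K : Set (EuclideanSpace ℝ (Fin d))) (h0 : (0 : EuclideanSpace ℝ (Fin d)) ∉ K)
    (μ : Measure (EuclideanSpace ℝ (Fin d))) [IsProbabilityMeasure μ]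
    (hμK : μ Kᶜ = 0) (hint : Integrable (fun x => ‖x‖ ^ 2) μ) :
    (1 : ℝ) / d ≤ (∫ x, ∫ y, ⟪x, y⟫ ^ 2 ∂μ ∂μ) / (∫ x, ‖x‖ ^ 2 ∂μ) ^ 2 ∧
      ((∫ x, ∫ y, ⟪x, y⟫ ^ 2 ∂μ ∂μ) / (∫ x, ‖x‖ ^ 2 ∂μ) ^ 2 = 1 / d ↔
        ∃ A : ℝ, 0 < A ∧ ∀ x : EuclideanSpace ℝ (Fin d),
          (∫ y, ⟪x, y⟫ ^ 2 ∂μ) = A * ‖x‖ ^ 2) := by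
  -- d ≠ 0
  rcases Nat.eq_zero_or_pos d with hd0 | hdpos
  · exfalso
    subst hd0
    have hK : Kᶜ = Set.univ := Set.eq_univ_of_forall fun x => by
      have hx : x = 0 := Subsingleton.elim x 0
      simpa [hx] using h0
    rw [hK] at hμK
    simpa [measure_univ] using hμK
  have hd : (0:ℝ) < d := by exact_mod_cast hdpos
  set m : Fin d → Fin d → ℝ := fun i j => ∫ x, x i * x j ∂μ with hm_def
  set t : ℝ := ∫ x, ‖x‖ ^ 2 ∂μ with ht_def
  set S : ℝ := ∫ x, ∫ y, ⟪x, y⟫ ^ 2 ∂μ ∂μ with hS_def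
  have ht : t = ∑ i, m i i := by
    rw [ht_def, ← integral_finset_sum _ (fun i _ => key_int μ hint i i)]
    exact integral_congr_ae (Filter.Eventually.of_forall fun x => norm_sq_sum x)
  have htpos : 0 < t := by
    rw [ht_def]
    refine (integral_pos_iff_support_of_nonneg (fun x => sq_nonneg _) hint).mpr ?_
    have h1 : μ {(0 : EuclideanSpace ℝ (Fin d))} = 0 :=
      measure_mono_null (by simpa using h0) hμK
    have : Function.support (fun x : EuclideanSpace ℝ (Fin d) => ‖x‖^2) = {0}ᶜ := by
      ext x; simp [Function.mem_support, norm_eq_zero, pow_eq_zero_iff]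
    rw [this, measure_compl (measurableSet_singleton 0) (measure_ne_top μ _), h1]
    simp [measure_univ]
  have hS : S = ∑ i, ∑ j, (m i j)^2 := by
    rw [hS_def]
    have : ∀ x : EuclideanSpace ℝ (Fin d),
        (∫ y, ⟪x, y⟫ ^ 2 ∂μ) = ∑ i, ∑ j, x i * x j * m i j := fun x => inner_expand μ hint x
    rw [integral_congr_ae (Filter.Eventually.of_forall this)]
    rw [integral_finset_sum _ (fun i _ => integrable_finset_sum _
      (fun j _ => (key_int μ hint i j).mul_const _))]
    refine Finset.sum_congr rfl fun i _ => ?_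
    rw [integral_finset_sum _ (fun j _ => (key_int μ hint i j).mul_const _)]
    exact Finset.sum_congr rfl fun j _ => by rw [integral_mul_const, sq]
  -- key identity
  have KI : ∑ i, ∑ j, (m i j - (if i = j then t/d else 0))^2 = S - t^2/d := by
    have e : ∀ i j : Fin d, (m i j - (if i = j then t/d else 0))^2
        = (m i j)^2 - 2*(t/d)*(if i = j then m i j else 0) + (if i = j then (t/d)^2 else 0) := by
      intro i j; split <;> ring
    simp_rw [e, Finset.sum_add_distrib, Finset.sum_sub_distrib, ← Finset.mul_sum,
      Finset.sum_ite_eq, Finset.mem_univ, if_true]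
    rw [hS, ← ht]
    push_cast
    simp only [Finset.sum_const, Finset.card_univ, Fintype.card_fin, nsmul_eq_mul]
    field_simp
    ring
  have hnn : 0 ≤ S - t^2/d := by
    rw [← KI]
    exact Finset.sum_nonneg fun i _ => Finset.sum_nonneg fun j _ => sq_nonneg _
  constructor
  · rw [div_le_div_iff₀ hd (by positivity)]
    have := (div_le_iff₀ hd).mp (by linarith : t^2/d ≤ S)
    linarith
  · constructor
    · intro heq
      have hSd : S = t^2/d := by
        rw [div_eq_div_iff (by positivity) (ne_of_gt hd)] at heq
        field_simp
        linarith
      have hzero : ∑ i, ∑ j, (m i j - (if i = j then t/d else 0))^2 = 0 := by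
        rw [KI, hSd]; ring
      have hm : ∀ i j, m i j = if i = j then t/d else 0 := by
        intro i j
        have h1 := (Finset.sum_eq_zero_iff_of_nonneg
          (fun i _ => Finset.sum_nonneg fun j _ => sq_nonneg _)).mp hzero i (Finset.mem_univ i)
        have h2 := (Finset.sum_eq_zero_iff_of_nonneg
          (fun j _ => sq_nonneg _)).mp h1 j (Finset.mem_univ j)
        have h3 : m i j - (if i = j then t/↑d else 0) = 0 :=
          pow_eq_zero_iff (n := 2) (by norm_num) |>.mp h2
        linarith [h3]
      simp only [hm_def] at hm
      refine ⟨t/d, by positivity, fun x => ?_⟩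
      rw [inner_expand μ hint x]
      simp_rw [hm, mul_ite, mul_zero, Finset.sum_ite_eq, Finset.mem_univ, if_true]
      rw [norm_sq_sum, Finset.mul_sum]
      exact Finset.sum_congr rfl fun i _ => by ring
    · rintro ⟨A, hA, hfr⟩
      have hmA : ∀ i, m i i = A := by
        intro i
        have h1 := hfr (EuclideanSpace.single i 1)
        rw [EuclideanSpace.norm_single] at h1
        have h2 : ∀ y : EuclideanSpace ℝ (Fin d),
            ⟪(EuclideanSpace.single i 1 : EuclideanSpace ℝ (Fin d)), y⟫ ^ 2 = y i * y i := by
          intro y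
          rw [EuclideanSpace.inner_single_left]
          simp [sq]
        rw [integral_congr_ae (Filter.Eventually.of_forall fun y => h2 y)] at h1
        simpa [hm_def] using h1
      have htA : t = d * A := by
        rw [ht]
        simp [hmA, Finset.sum_const, nsmul_eq_mul]
      have hSA : S = A * t := by
        rw [hS_def]
        rw [integral_congr_ae (Filter.Eventually.of_forall fun x => hfr x)]
        rw [integral_const_mul]
      rw [hSA, htA]
      have hA' : A ≠ 0 := ne_of_gt hA
      have hd' : (d:ℝ) ≠ 0 := ne_of_gt hd
      field_simp
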